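/- Let φ : ℕ → ℝ with φ(0) = 0 and φ(x) > 0 for x ≥ 1, and let λ, λ' > 0 be such that Z_λ < ∞ and Z_{λ'} < ∞. Let f : ℕ → ℝ be integrable with respect to both I_φ(λ) and I_φ(λ'), and let g : ℕ → ℝ be a bounded solution of the Stein equation for f with respect to I_φ(λ). Then |Σ_x f(x) I_φ(λ')(x) − Σ_x f(x) I_φ(λ)(x)| ≤ |λ − λ'| · sup_{x ∈ ℕ} |g(x)|. -/

import Mathlib

open scoped BigOperators

set_option maxHeartbeats 800000

/-- The product `φ(1)⋯φ(x)` (empty product equal to `1`). -/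
noncomputable def phiProd (φ : ℕ → ℝ) (x : ℕ) : ℝ := ∏ i ∈ Finset.range x, φ (i + 1)

/-- Normalizing constant `Z_λ = Σ_{x≥0} λ^x / (φ(1)⋯φ(x))`. -/
noncomputable def Zphi (φ : ℕ → ℝ) (lam : ℝ) : ℝ := ∑' x : ℕ, lam ^ x / phiProd φ x

/-- The probability measure `I_φ(λ)(x) = Z_λ⁻¹ λ^x / (φ(1)⋯φ(x))`. -/
noncomputable def Iphi (φ : ℕ → ℝ) (lam : ℝ) (x : ℕ) : ℝ :=
  (lam ^ x / phiProd φ x) / Zphi φ lam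

/-- Closeness of two `I_φ(λ)` distributions: if `g` is a bounded solution of the Stein
equation for `f` with respect to `I_φ(λ)`, then
`|Σ f dI_φ(λ') − Σ f dI_φ(λ)| ≤ |λ − λ'| · sup_x |g(x)|`. -/
theorem Iphi_closeness (φ : ℕ → ℝ) (hφ0 : φ 0 = 0) (hφ : ∀ x : ℕ, 1 ≤ x → 0 < φ x)
    (lam lam' : ℝ) (hlam : 0 < lam) (hlam' : 0 < lam')
    (hZ : Summable fun x : ℕ => lam ^ x / phiProd φ x)
    (hZ' : Summable fun x : ℕ => lam' ^ x / phiProd φ x)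
    (f : ℕ → ℝ)
    (hf : Summable fun x : ℕ => |f x| * Iphi φ lam x)
    (hf' : Summable fun x : ℕ => |f x| * Iphi φ lam' x)
    (g : ℕ → ℝ)
    (hg : ∀ x : ℕ, lam * g (x + 1) - φ x * g x = f x - ∑' y : ℕ, f y * Iphi φ lam y)
    (hgbd : BddAbove (Set.range fun x : ℕ => |g x|)) :
    |(∑' x : ℕ, f x * Iphi φ lam' x) - ∑' x : ℕ, f x * Iphi φ lam x| ≤
      |lam - lam'| * ⨆ x : ℕ, |g x| := by
  have hπ : ∀ x, 0 < phiProd φ x := fun x =>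
    Finset.prod_pos (fun i _ => hφ (i + 1) (Nat.le_add_left 1 i))
  have hterm : ∀ x, 0 < lam' ^ x / phiProd φ x := fun x =>
    div_pos (pow_pos hlam' x) (hπ x)
  have hZ'pos : 0 < Zphi φ lam' := Summable.tsum_pos hZ' (fun x => (hterm x).le) 0 (hterm 0)
  have hIpos : ∀ x, 0 < Iphi φ lam' x := fun x => div_pos (hterm x) hZ'pos
  have hsumI : Summable (Iphi φ lam') := hZ'.div_const _
  have hone : ∑' x, Iphi φ lam' x = 1 := by
    simp only [Iphi]
    rw [tsum_div_const, show (∑' x, lam' ^ x / phiProd φ x) = Zphi φ lam' from rfl,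
      div_self hZ'pos.ne']
  set M : ℝ := ⨆ x : ℕ, |g x| with hMdef
  have hM : ∀ x, |g x| ≤ M := fun x => le_ciSup hgbd x
  have hM0 : 0 ≤ M := (abs_nonneg (g 0)).trans (hM 0)
  -- summability of f * I'
  have hfS' : Summable (fun x => f x * Iphi φ lam' x) := by
    apply Summable.of_abs
    refine hf'.congr fun x => ?_
    rw [abs_mul, abs_of_pos (hIpos x)]
  -- summability of g(x+1) * I' x
  have hgS : Summable (fun x => g (x + 1) * Iphi φ lam' x) := by
    apply Summable.of_abs
    apply Summable.of_nonneg_of_le (fun x => abs_nonneg _)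
      (fun x => ?_) (hsumI.mul_left M)
    rw [abs_mul, abs_of_pos (hIpos x)]
    exact mul_le_mul_of_nonneg_right (hM _) (hIpos x).le
  set S : ℝ := ∑' x, g (x + 1) * Iphi φ lam' x with hSdef
  -- the shift identity
  have hshift : ∀ x : ℕ, φ (x + 1) * Iphi φ lam' (x + 1) = lam' * Iphi φ lam' x := by
    intro x
    have hπs : phiProd φ (x + 1) = phiProd φ x * φ (x + 1) := Finset.prod_range_succ _ _
    have h1 : (φ (x + 1)) ≠ 0 := (hφ (x + 1) (Nat.le_add_left 1 x)).ne'
    have h2 : phiProd φ x ≠ 0 := (hπ x).ne'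
    have h3 : Zphi φ lam' ≠ 0 := hZ'pos.ne'
    simp only [Iphi, hπs]
    field_simp
    ring
  -- h x = φ x * g x * I' x
  have hh1 : ∀ x : ℕ, φ (x + 1) * g (x + 1) * Iphi φ lam' (x + 1)
      = lam' * (g (x + 1) * Iphi φ lam' x) := by
    intro x
    calc φ (x + 1) * g (x + 1) * Iphi φ lam' (x + 1)
        = (φ (x + 1) * Iphi φ lam' (x + 1)) * g (x + 1) := by ring
      _ = (lam' * Iphi φ lam' x) * g (x + 1) := by rw [hshift x]
      _ = lam' * (g (x + 1) * Iphi φ lam' x) := by ring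
  have hhsum : Summable (fun x => φ x * g x * Iphi φ lam' x) := by
    rw [← summable_nat_add_iff 1]
    exact ((hgS.mul_left lam').congr fun x => (hh1 x).symm)
  have hhval : (∑' x, φ x * g x * Iphi φ lam' x) = lam' * S := by
    rw [Summable.tsum_eq_zero_add hhsum]
    simp only [hφ0, zero_mul]
    rw [tsum_congr hh1, tsum_mul_left, zero_add]
  -- Stein identity summed against I'
  set Ef : ℝ := ∑' y, f y * Iphi φ lam y with hEfdef
  have key : (∑' x, f x * Iphi φ lam' x) - Ef = (lam - lam') * S := by
    have hpt : ∀ x : ℕ, f x * Iphi φ lam' x - Ef * Iphi φ lam' x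
        = lam * (g (x + 1) * Iphi φ lam' x) - φ x * g x * Iphi φ lam' x := by
      intro x
      rw [← sub_mul, ← hg x]
      ring
    have hsum1 : (∑' x, (f x * Iphi φ lam' x - Ef * Iphi φ lam' x))
        = (∑' x, f x * Iphi φ lam' x) - Ef * ∑' x, Iphi φ lam' x := by
      rw [Summable.tsum_sub hfS' (hsumI.mul_left Ef), tsum_mul_left]
    have hsum2 : (∑' x, (lam * (g (x + 1) * Iphi φ lam' x) - φ x * g x * Iphi φ lam' x))
        = lam * S - lam' * S := by
      rw [Summable.tsum_sub (hgS.mul_left lam) hhsum, tsum_mul_left, hhval]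
    have := tsum_congr (L := SummationFilter.unconditional ℕ) hpt
    rw [hsum1, hsum2, hone, mul_one] at this
    linarith [this]
  rw [key, abs_mul]
  apply mul_le_mul_of_nonneg_left _ (abs_nonneg _)
  have hnorm : Summable fun x => ‖g (x + 1) * Iphi φ lam' x‖ := by
    simpa only [Real.norm_eq_abs] using hgS.abs
  calc |S| ≤ ∑' x, |g (x + 1) * Iphi φ lam' x| := by
        simpa only [Real.norm_eq_abs] using norm_tsum_le_tsum_norm hnorm
    _ ≤ ∑' x, M * Iphi φ lam' x := by
        apply Summable.tsum_le_tsum _ hgS.abs (hsumI.mul_left M)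
        intro x
        rw [abs_mul, abs_of_pos (hIpos x)]
        exact mul_le_mul_of_nonneg_right (hM _) (hIpos x).le
    _ = M := by rw [tsum_mul_left, hone, mul_one]
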